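/- Suppose N ≤ M and f : [N] → [M] is not injective. Then there exists g : [N] → [M] such that (f, g) is an edge of G(N, M) and the image of g is strictly larger than the image of f (i.e., g occupies strictly more rooms than f). -/
import Mathlib


/-- Edge relation of the configuration graph `G(N, M)`:
`(f, g)` is an edge iff for all `k`, `g k ≠ f k` iff `k` is the largest index in its `f`-fiber. -/
def RoomEdge (N M : ℕ) (f g : Fin N → Fin M) : Prop :=
  ∀ k : Fin N, g k ≠ f k ↔ ∀ j : Fin N, f j = f k → j ≤ k

/-- A directed path of length `n` from `f` to `g` in `G(N, M)`. -/
def RoomPath (N M : ℕ) (f g : Fin N → Fin M) (n : ℕ) : Prop :=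
  ∃ p : ℕ → Fin N → Fin M, p 0 = f ∧ p n = g ∧ ∀ i < n, RoomEdge N M (p i) (p (i + 1))

/-- `V_s`: configurations injective on the `M` largest indices `(N−M, N]`
(0-indexed: indices `k` with `N - M ≤ k`). -/
def RoomVs (N M : ℕ) (f : Fin N → Fin M) : Prop :=
  ∀ j k : Fin N, N - M ≤ (j : ℕ) → N - M ≤ (k : ℕ) → f j = f k → j = k

/-- `V_c`: configurations constant on the `M` largest indices `(N−M, N]`. -/
def RoomVc (N M : ℕ) (f : Fin N → Fin M) : Prop :=
  ∀ j k : Fin N, N - M ≤ (j : ℕ) → N - M ≤ (k : ℕ) → f j = f k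

/-- Next element of `S` strictly above `v`, or `r` if none. -/
noncomputable def roomNext {M : ℕ} (S : Finset (Fin M)) (r v : Fin M) : Fin M :=
  if h : (S.filter (fun w => v < w)).Nonempty then (S.filter (fun w => v < w)).min' h else r

open Classical in
/-- The new configuration: non-maxima keep their room, the max of the `v0` fiber goes
to the smallest element of `S` (or `r`), other maxima go to the next element of `S` (or `r`). -/
noncomputable def roomG {N M : ℕ} (f : Fin N → Fin M) (v0 r : Fin M)
    (S : Finset (Fin M)) (k : Fin N) : Fin M :=
  if (∀ j, f j = f k → j ≤ k) then
    (if f k = v0 then (if h : S.Nonempty then S.min' h else r) else roomNext S r (f k))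
  else f k

lemma roomNext_cases {M : ℕ} (S : Finset (Fin M)) (r v : Fin M) :
    roomNext S r v = r ∨ (roomNext S r v ∈ S ∧ v < roomNext S r v) := by
  unfold roomNext
  split
  · rename_i h
    right
    have := Finset.min'_mem _ h
    simp only [Finset.mem_filter] at this
    exact ⟨this.1, this.2⟩
  · left; rfl

theorem noninjective_step_increases_range (N M : ℕ) (hN : 1 ≤ N) (hM : 2 ≤ M)
    (hNM : N ≤ M) (f : Fin N → Fin M) (hf : ¬ Function.Injective f) :
    ∃ g : Fin N → Fin M, RoomEdge N M f g ∧ Set.range f ⊂ Set.range g := by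
  classical
  obtain ⟨a, b, hfab, hab⟩ : ∃ a b, f a = f b ∧ a ≠ b := by
    rw [Function.Injective] at hf; push_neg at hf; exact hf
  -- a room not used by f
  have himg : (Finset.univ.image f).card < M := by
    have h1 : Finset.univ.image f = (Finset.univ.erase a).image f := by
      apply Finset.Subset.antisymm
      · intro x hx
        simp only [Finset.mem_image] at hx ⊢
        obtain ⟨k, _, hk⟩ := hx
        by_cases hka : k = a
        · exact ⟨b, by simp [hab.symm], by rw [← hk, hka, hfab]⟩
        · exact ⟨k, by simp [hka], hk⟩
      · exact Finset.image_subset_image (Finset.erase_subset _ _)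
    calc (Finset.univ.image f).card ≤ (Finset.univ.erase a).card := by
          rw [h1]; exact Finset.card_image_le
      _ < N := by
          rw [Finset.card_erase_of_mem (Finset.mem_univ a)]
          simp only [Finset.card_univ, Fintype.card_fin]
          omega
      _ ≤ M := hNM
  obtain ⟨r, hr⟩ : ∃ r, r ∉ Finset.univ.image f := by
    by_contra h
    push_neg at h
    have : (Finset.univ : Finset (Fin M)) ⊆ Finset.univ.image f := fun x _ => h x
    have := Finset.card_le_card this
    simp only [Finset.card_univ, Fintype.card_fin] at this
    omega
  have hrf : ∀ k, f k ≠ r := by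
    intro k hk
    exact hr (hk ▸ Finset.mem_image_of_mem f (Finset.mem_univ k))
  -- set of values with singleton fibers
  set S : Finset (Fin M) :=
    Finset.univ.filter (fun v => (Finset.univ.filter (fun k => f k = v)).card = 1) with hS_def
  set v0 : Fin M := f a with hv0
  have hv0S : v0 ∉ S := by
    intro h
    simp only [hS_def, Finset.mem_filter] at h
    have hsub : ({a, b} : Finset (Fin N)) ⊆ Finset.univ.filter (fun k => f k = v0) := by
      intro x hx
      simp only [Finset.mem_insert, Finset.mem_singleton] at hx
      rcases hx with rfl | rfl <;> simp [hv0, hfab.symm]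
    have : 2 ≤ (Finset.univ.filter (fun k => f k = v0)).card := by
      calc 2 = ({a, b} : Finset (Fin N)).card := by rw [Finset.card_insert_of_notMem (by simpa using hab), Finset.card_singleton]
        _ ≤ _ := Finset.card_le_card hsub
    omega
  -- membership of S gives a fiber element
  have hSmem : ∀ v ∈ S, ∃ k, f k = v := by
    intro v hv
    simp only [hS_def, Finset.mem_filter] at hv
    obtain ⟨x, hx⟩ := Finset.card_eq_one.mp hv.2
    refine ⟨x, ?_⟩
    have : x ∈ Finset.univ.filter (fun k => f k = v) := by rw [hx]; simp
    simpa using this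
  -- fiber maxima
  have hmax : ∀ k : Fin N, ∃ m : Fin N, f m = f k ∧ ∀ j, f j = f k → j ≤ m := by
    intro k
    have hne : (Finset.univ.filter (fun j => f j = f k)).Nonempty := ⟨k, by simp⟩
    refine ⟨(Finset.univ.filter (fun j => f j = f k)).max' hne, ?_, ?_⟩
    · have := Finset.max'_mem _ hne; simpa using this
    · intro j hj; exact Finset.le_max' _ _ (by simp [hj])
  set g : Fin N → Fin M := roomG f v0 r S with hg
  have hgmax : ∀ k : Fin N, (∀ j, f j = f k → j ≤ k) →
      g k = if f k = v0 then (if h : S.Nonempty then S.min' h else r) else roomNext S r (f k) := by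
    intro k hk
    rw [hg]; unfold roomG; rw [if_pos hk]
  have hgnmax : ∀ k : Fin N, ¬ (∀ j, f j = f k → j ≤ k) → g k = f k := by
    intro k hk
    rw [hg]; unfold roomG; rw [if_neg hk]
  refine ⟨g, ?_, ?_⟩
  · -- edge
    intro k
    constructor
    · intro hne
      by_contra hk
      exact hne (hgnmax k hk)
    · intro hk
      rw [hgmax k hk]
      by_cases hkv : f k = v0
      · rw [if_pos hkv]
        split
        · rename_i h
          intro heq
          rw [hkv] at heq
          exact hv0S (heq ▸ Finset.min'_mem S h)
        · exact fun heq => hrf k heq.symm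
      · rw [if_neg hkv]
        rcases roomNext_cases S r (f k) with h | ⟨_, h⟩
        · rw [h]; exact fun heq => hrf k heq.symm
        · exact fun heq => absurd heq.symm (ne_of_lt h)
  · -- strict range inclusion
    have hsub : Set.range f ⊆ Set.range g := by
      rintro v ⟨k0, rfl⟩
      set v := f k0 with hv
      by_cases hvS : v ∈ S
      · -- singleton fiber: v is hit by the max of a smaller fiber
        have hSne : S.Nonempty := ⟨v, hvS⟩
        by_cases hvmin : v = S.min' hSne
        · -- hit by the max of the v0-fiber
          obtain ⟨m, hm1, hm2⟩ := hmax a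
          have hmm : ∀ j, f j = f m → j ≤ m := by
            intro j hj; exact hm2 j (by rw [← hm1]; exact hj)
          refine ⟨m, ?_⟩
          rw [hgmax m hmm, if_pos (by rw [hm1, hv0]), dif_pos hSne, hvmin]
        · -- hit by the max of the fiber of the predecessor of v in S
          set T : Finset (Fin M) := S.filter (fun w => w < v) with hT
          have hTne : T.Nonempty := by
            refine ⟨S.min' hSne, ?_⟩
            simp only [hT, Finset.mem_filter]
            exact ⟨Finset.min'_mem _ _, lt_of_le_of_ne (Finset.min'_le _ _ hvS) (Ne.symm hvmin)⟩
          set w : Fin M := T.max' hTne with hw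
          have hwT : w ∈ T := Finset.max'_mem _ _
          have hwS : w ∈ S := (Finset.mem_filter.mp hwT).1
          have hwv : w < v := (Finset.mem_filter.mp hwT).2
          obtain ⟨kw, hkw⟩ := hSmem w hwS
          obtain ⟨m, hm1, hm2⟩ := hmax kw
          have hfm : f m = w := by rw [hm1, hkw]
          have hmm : ∀ j, f j = f m → j ≤ m := by
            intro j hj; exact hm2 j (by rw [← hm1]; exact hj)
          refine ⟨m, ?_⟩
          rw [hgmax m hmm, if_neg (by rw [hfm]; exact fun h => hv0S (h ▸ hwS))]
          -- roomNext S r w = v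
          have hvmem : v ∈ S.filter (fun u => w < u) := Finset.mem_filter.mpr ⟨hvS, hwv⟩
          have hne2 : (S.filter (fun u => f m < u)).Nonempty := ⟨v, by rw [hfm]; exact hvmem⟩
          unfold roomNext
          rw [dif_pos hne2]
          apply le_antisymm
          · apply Finset.min'_le
            rw [hfm]; exact hvmem
          · apply Finset.le_min'
            intro u hu
            simp only [Finset.mem_filter, hfm] at hu
            by_contra hlt
            push_neg at hlt
            have huT : u ∈ T := Finset.mem_filter.mpr ⟨hu.1, hlt⟩
            exact absurd (Finset.le_max' T u huT) (not_le.mpr hu.2)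
      · -- multi fiber: v is kept by a non-maximal element
        have hk0mem : k0 ∈ Finset.univ.filter (fun k => f k = v) := by simp [hv]
        have hcard : (Finset.univ.filter (fun k => f k = v)).card ≠ 1 := by
          intro h
          exact hvS (by simp only [hS_def, Finset.mem_filter]; exact ⟨Finset.mem_univ v, h⟩)
        have hcard2 : 1 < (Finset.univ.filter (fun k => f k = v)).card := by
          have : 0 < (Finset.univ.filter (fun k => f k = v)).card :=
            Finset.card_pos.mpr ⟨k0, hk0mem⟩
          omega
        obtain ⟨m, hm1, hm2⟩ := hmax k0
        obtain ⟨j, hjmem, hjm⟩ := Finset.exists_mem_ne hcard2 m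
        have hfj : f j = v := (Finset.mem_filter.mp hjmem).2
        have hjnm : ¬ (∀ i, f i = f j → i ≤ j) := by
          intro h
          have h1 : m ≤ j := h m (by rw [hm1, hfj, hv])
          have h2 : j ≤ m := hm2 j (by rw [hfj, hv])
          exact hjm (le_antisymm h2 h1)
        exact ⟨j, by rw [hgnmax j hjnm, hfj]⟩
    have hrg : r ∈ Set.range g := by
      by_cases hSne : S.Nonempty
      · -- the max of the fiber of max S goes to r
        set w : Fin M := S.max' hSne with hw
        have hwS : w ∈ S := Finset.max'_mem _ _
        obtain ⟨kw, hkw⟩ := hSmem w hwS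
        obtain ⟨m, hm1, hm2⟩ := hmax kw
        have hfm : f m = w := by rw [hm1, hkw]
        have hmm : ∀ j, f j = f m → j ≤ m := by
          intro j hj; exact hm2 j (by rw [← hm1]; exact hj)
        refine ⟨m, ?_⟩
        rw [hgmax m hmm, if_neg (by rw [hfm]; exact fun h => hv0S (h ▸ hwS))]
        unfold roomNext
        rw [dif_neg]
        rintro ⟨u, hu⟩
        simp only [Finset.mem_filter, hfm] at hu
        exact absurd (Finset.le_max' S u hu.1) (not_le.mpr hu.2)
      · -- S empty: the max of the v0-fiber goes to r
        obtain ⟨m, hm1, hm2⟩ := hmax a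
        have hmm : ∀ j, f j = f m → j ≤ m := by
          intro j hj; exact hm2 j (by rw [← hm1]; exact hj)
        refine ⟨m, ?_⟩
        rw [hgmax m hmm, if_pos (by rw [hm1, hv0]), dif_neg hSne]
    refine ⟨hsub, fun h => ?_⟩
    obtain ⟨k, hk⟩ := h hrg
    exact hrf k hk
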